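/- Suppose the implicit scheme (conditions (i)–(v)) holds for all k ∈ ℕ with the alternative semi-implicit multiplier choice λ̄_{k+1} = λ_k + (α_k/θ_k)(Av_k + Bw_{k+1} − b), parameter recursions θ₀ = 1, θ_{k+1} = θ_k/(1+α_k), γ₀ > 0, γ_{k+1} = (γ_k + α_kμ_f)/(1+α_k), β₀ > 0, β_{k+1} = (β_k + α_kμ_g)/(1+α_k), the initial setting γ₀ = μ_f whenever μ_f > 0 and β₀ = μ_g whenever μ_g > 0, and step sizes determined by α_k²‖A‖² = γ_k θ_k (with ‖A‖ > 0). Let (x*, y*, λ*) be a saddle point, E₀ and R₀ as before. Then for all k: E_{k+1} − E_k ≤ −α_k E_{k+1}; ‖Ax_k + By_k − b‖ ≤ θ_k R₀; f(x_k) + g(y_k) + ⟪λ*, Ax_k + By_k − b⟫ − f(x*) − g(y*) ≤ θ_k E₀; |f(x_k) + g(y_k) − f(x*) − g(y*)| ≤ θ_k(E₀ + ‖λ*‖R₀); and θ_k ≤ min{ Q/(Q + √γ₀·k), 4Q²/(2Q + √μ_f·k)² } where Q = ‖A‖ + √γ₀. -/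

import Mathlib

open Real
open scoped RealInnerProductSpace

lemma primal_core {H : Type*} [NormedAddCommGroup H] [InnerProductSpace ℝ H]
    (α μ γ : ℝ) (hα : 0 < α) (hμ : 0 ≤ μ) (a b c : H) :
    γ/2*‖b‖^2 - γ/2*‖c‖^2 + γ/2*‖b + c‖^2 + α*μ/2*‖b‖^2
      ≤ α * ⟪μ • a + (γ/α) • (b + c), b - a⟫ + ⟪μ • a + (γ/α) • (b + c), α • a⟫
        + α*μ/2*‖b - a‖^2 + μ/2*‖α • a‖^2 := by
  have hα' : α ≠ 0 := ne_of_gt hα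
  obtain ⟨δ, rfl⟩ : ∃ δ, γ = α * δ := ⟨γ/α, by field_simp⟩
  have h1 : α * δ / α = δ := by field_simp
  rw [h1]
  simp only [inner_add_left, real_inner_smul_left, real_inner_smul_right,
    inner_sub_right, inner_add_right, norm_add_sq_real, norm_sub_sq_real, norm_smul,
    Real.norm_eq_abs, mul_pow, sq_abs, real_inner_comm c b, real_inner_comm b a,
    real_inner_comm c a, real_inner_self_eq_norm_sq]
  have n1 : 0 ≤ α * μ / 2 * ‖a‖^2 := by positivity
  have n2 : 0 ≤ μ / 2 * (α^2 * ‖a‖^2) := by positivity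
  nlinarith [n1, n2]

lemma dual_core {H : Type*} [NormedAddCommGroup H] [InnerProductSpace ℝ H]
    (θ α γ nA ν : ℝ) (hθ : 0 < θ) (hν : 0 ≤ ν)
    (hstep : α^2 * nA^2 = γ * θ) (u d lam lam' ls : H)
    (hrel : θ • (lam' - lam) = α • u) (hd : ‖d‖ ≤ nA * ν) :
    θ * ⟪ls - (lam + (α/θ) • (u - d)), lam' - lam⟫
      ≤ θ/2*‖lam - ls‖^2 - θ/2*‖lam' - ls‖^2 + γ/2*ν^2 := by
  have hθ' : θ ≠ 0 := ne_of_gt hθ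
  have hrel' : lam' - lam = (α/θ) • u := by
    have h := congrArg (fun z => (θ⁻¹ : ℝ) • z) hrel
    simp only [smul_smul, inv_mul_cancel₀ hθ', one_smul] at h
    rw [h, div_eq_inv_mul]
  have hl : lam' - ls = (lam - ls) + (α/θ) • u := by
    rw [← hrel']; abel
  have he : γ = θ * (α/θ)^2 * nA^2 := by
    field_simp
    linear_combination -hstep
  have hcs : ⟪d, u⟫ ≤ nA * ν * ‖u‖ :=
    le_trans (real_inner_le_norm d u) (mul_le_mul_of_nonneg_right hd (norm_nonneg u))
  rw [hrel', hl]
  simp only [inner_sub_left, inner_add_left, inner_sub_right, real_inner_smul_left,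
    real_inner_smul_right, norm_add_sq_real, norm_smul, Real.norm_eq_abs, mul_pow, sq_abs,
    real_inner_comm lam u, real_inner_comm ls u, real_inner_self_eq_norm_sq]
  have hq : 0 ≤ θ * (α/θ)^2 := by positivity
  nlinarith [mul_nonneg hq (sq_nonneg (‖u‖ - nA*ν)), hcs,
    mul_le_mul_of_nonneg_left hcs hq]

set_option maxHeartbeats 3200000 in
/-- Convergence of the alternative semi-implicit primal-dual method (Theorem 3.2):
multiplier choice `λ̄ₖ₊₁ = λₖ + (αₖ/θₖ)(A vₖ + B wₖ₊₁ − b)` with step sizes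
`αₖ²‖A‖² = γₖ θₖ`. -/
theorem semi_implicit_choice_lw_convergence
    {m n r : ℕ}
    (X : Set (EuclideanSpace ℝ (Fin m))) (Y : Set (EuclideanSpace ℝ (Fin n)))
    (hXconv : Convex ℝ X) (hXclosed : IsClosed X)
    (hYconv : Convex ℝ Y) (hYclosed : IsClosed Y)
    (A : EuclideanSpace ℝ (Fin m) →L[ℝ] EuclideanSpace ℝ (Fin r))
    (B : EuclideanSpace ℝ (Fin n) →L[ℝ] EuclideanSpace ℝ (Fin r))
    (b : EuclideanSpace ℝ (Fin r))
    (f : EuclideanSpace ℝ (Fin m) → ℝ) (g : EuclideanSpace ℝ (Fin n) → ℝ)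
    (hfconv : ConvexOn ℝ Set.univ f) (hgconv : ConvexOn ℝ Set.univ g)
    (μf μg : ℝ) (hμf : 0 ≤ μf) (hμg : 0 ≤ μg)
    -- parameter sequences
    (α θ γ β : ℕ → ℝ) (hα : ∀ k, 0 < α k)
    (hθ0 : θ 0 = 1) (hγ0pos : 0 < γ 0) (hβ0pos : 0 < β 0)
    (hθrec : ∀ k, θ (k + 1) = θ k / (1 + α k))
    (hγrec : ∀ k, γ (k + 1) = (γ k + α k * μf) / (1 + α k))
    (hβrec : ∀ k, β (k + 1) = (β k + α k * μg) / (1 + α k))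
    (hγinit : 0 < μf → γ 0 = μf) (hβinit : 0 < μg → β 0 = μg)
    -- iterates
    (x v : ℕ → EuclideanSpace ℝ (Fin m)) (y w : ℕ → EuclideanSpace ℝ (Fin n))
    (l lbar : ℕ → EuclideanSpace ℝ (Fin r))
    (hx0 : x 0 ∈ X) (hy0 : y 0 ∈ Y)
    -- the implicit scheme (i)-(v)
    (hi : ∀ k, x (k + 1) - x k = α k • (v (k + 1) - x (k + 1)))
    (hii : ∀ k, x (k + 1) ∈ X ∧ ∀ z ∈ X,
      f z + ⟪lbar k, A z⟫ ≥
        f (x (k + 1)) + ⟪lbar k, A (x (k + 1))⟫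
          + ⟪μf • (x (k + 1) - v (k + 1)) - (γ k / α k) • (v (k + 1) - v k),
              z - x (k + 1)⟫
          + μf / 2 * ‖z - x (k + 1)‖ ^ 2)
    (hiii : ∀ k, θ k • (l (k + 1) - l k) = α k • (A (v (k + 1)) + B (w (k + 1)) - b))
    (hiv : ∀ k, y (k + 1) ∈ Y ∧ ∀ z ∈ Y,
      g z + ⟪lbar k, B z⟫ ≥
        g (y (k + 1)) + ⟪lbar k, B (y (k + 1))⟫
          + ⟪μg • (y (k + 1) - w (k + 1)) - (β k / α k) • (w (k + 1) - w k),
              z - y (k + 1)⟫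
          + μg / 2 * ‖z - y (k + 1)‖ ^ 2)
    (hv : ∀ k, y (k + 1) - y k = α k • (w (k + 1) - y (k + 1)))
    -- multiplier choice and step-size rule
    (hlbar : ∀ k, lbar k = l k + (α k / θ k) • (A (v k) + B (w (k + 1)) - b))
    (hstep : ∀ k, α k ^ 2 * ‖A‖ ^ 2 = γ k * θ k)
    -- saddle point
    (xs : EuclideanSpace ℝ (Fin m)) (ys : EuclideanSpace ℝ (Fin n))
    (ls : EuclideanSpace ℝ (Fin r))
    (hxs : xs ∈ X) (hys : ys ∈ Y) (hfeas : A xs + B ys = b)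
    (hsaddle : ∀ x' ∈ X, ∀ y' ∈ Y,
      f x' + g y' + ⟪ls, A x' + B y' - b⟫ ≥ f xs + g ys)
    -- Lyapunov function and constants
    (E : ℕ → ℝ)
    (hE : ∀ k, E k = f (x k) + g (y k) + ⟪ls, A (x k) + B (y k) - b⟫ - f xs - g ys
      + γ k / 2 * ‖v k - xs‖ ^ 2 + β k / 2 * ‖w k - ys‖ ^ 2 + θ k / 2 * ‖l k - ls‖ ^ 2)
    (R0 : ℝ)
    (hR0 : R0 = Real.sqrt (2 * E 0) + ‖l 0 - ls‖ + ‖A (x 0) + B (y 0) - b‖)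
    (hA : 0 < ‖A‖)
    (Q : ℝ) (hQ : Q = ‖A‖ + Real.sqrt (γ 0)) :
    ∀ k : ℕ,
      E (k + 1) - E k ≤ -(α k) * E (k + 1) ∧
      E k ≤ θ k * E 0 ∧
      ‖A (x k) + B (y k) - b‖ ≤ θ k * R0 ∧
      f (x k) + g (y k) + ⟪ls, A (x k) + B (y k) - b⟫ - f xs - g ys ≤ θ k * E 0 ∧
      |f (x k) + g (y k) - f xs - g ys| ≤ θ k * (E 0 + ‖ls‖ * R0) ∧
      θ k ≤ min (Q / (Q + Real.sqrt (γ 0) * (k : ℝ)))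
                (4 * Q ^ 2 / (2 * Q + Real.sqrt μf * (k : ℝ)) ^ 2) := by
  have h1α : ∀ k, (0:ℝ) < 1 + α k := fun k => by linarith [hα k]
  have hθpos : ∀ k, 0 < θ k := by
    intro k; induction k with
    | zero => rw [hθ0]; norm_num
    | succ k ih => rw [hθrec k]; exact div_pos ih (h1α k)
  have hγpos : ∀ k, 0 < γ k := by
    intro k; induction k with
    | zero => exact hγ0pos
    | succ k ih =>
      rw [hγrec k]
      exact div_pos (by nlinarith [mul_nonneg (hα k).le hμf]) (h1α k)
  have hβpos : ∀ k, 0 < β k := by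
    intro k; induction k with
    | zero => exact hβ0pos
    | succ k ih =>
      rw [hβrec k]
      exact div_pos (by nlinarith [mul_nonneg (hα k).le hμg]) (h1α k)
  have hθle1 : ∀ k, θ k ≤ 1 := by
    intro k; induction k with
    | zero => rw [hθ0]
    | succ k ih =>
      rw [hθrec k, div_le_one (h1α k)]
      linarith [hα k]
  have hmemX : ∀ k, x k ∈ X := by
    intro k; cases k with
    | zero => exact hx0
    | succ k => exact (hii k).1
  have hmemY : ∀ k, y k ∈ Y := by
    intro k; cases k with
    | zero => exact hy0
    | succ k => exact (hiv k).1
  have hLpos : ∀ k, 0 ≤ f (x k) + g (y k) + ⟪ls, A (x k) + B (y k) - b⟫ - f xs - g ys := by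
    intro k
    have := hsaddle (x k) (hmemX k) (y k) (hmemY k)
    linarith
  have hZ2 : ∀ k, (1 + α k) • (A (x (k+1)) + B (y (k+1)) - b)
      = (A (x k) + B (y k) - b) + θ k • (l (k+1) - l k) := by
    intro k
    have h1 := congrArg A (hi k)
    have h2 := congrArg B (hv k)
    simp only [map_sub, map_smul] at h1 h2
    rw [hiii k]
    linear_combination (norm := module) h1 + h2
  -- the key one-step estimate
  have hstepE : ∀ k, (1 + α k) * E (k+1) ≤ E k := by
    intro k
    have hαk := hα k
    obtain ⟨hx1, hfineq⟩ := hii k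
    obtain ⟨hy1, hgineq⟩ := hiv k
    -- primal block f
    have hxsx : xs - x (k+1) = (xs - v (k+1)) - (x (k+1) - v (k+1)) := by abel
    have hxx : x k - x (k+1) = α k • (x (k+1) - v (k+1)) := by
      linear_combination (norm := module) -(hi k)
    have hPf : μf • (x (k+1) - v (k+1)) - (γ k / α k) • (v (k+1) - v k)
        = μf • (x (k+1) - v (k+1)) + (γ k / α k) • ((xs - v (k+1)) + (v k - xs)) := by
      module
    have If := hfineq xs hxs
    have IIf := hfineq (x k) (hmemX k)
    rw [hPf, hxsx] at If
    rw [hPf, hxx] at IIf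
    have PCf := primal_core (α k) μf (γ k) hαk hμf
      (x (k+1) - v (k+1)) (xs - v (k+1)) (v k - xs)
    have If' := mul_le_mul_of_nonneg_left If hαk.le
    -- primal block g
    have hysy : ys - y (k+1) = (ys - w (k+1)) - (y (k+1) - w (k+1)) := by abel
    have hyy : y k - y (k+1) = α k • (y (k+1) - w (k+1)) := by
      linear_combination (norm := module) -(hv k)
    have hPg : μg • (y (k+1) - w (k+1)) - (β k / α k) • (w (k+1) - w k)
        = μg • (y (k+1) - w (k+1)) + (β k / α k) • ((ys - w (k+1)) + (w k - ys)) := by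
      module
    have Ig := hgineq ys hys
    have IIg := hgineq (y k) (hmemY k)
    rw [hPg, hysy] at Ig
    rw [hPg, hyy] at IIg
    have PCg := primal_core (α k) μg (β k) hαk hμg
      (y (k+1) - w (k+1)) (ys - w (k+1)) (w k - ys)
    have Ig' := mul_le_mul_of_nonneg_left Ig hαk.le
    -- dual block
    have hdb : ‖A (v (k+1)) - A (v k)‖ ≤ ‖A‖ * ‖(xs - v (k+1)) + (v k - xs)‖ := by
      have h1 : A (v (k+1)) - A (v k) = A (v (k+1) - v k) := (map_sub A _ _).symm
      have h2 : (xs - v (k+1)) + (v k - xs) = -(v (k+1) - v k) := by module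
      rw [h1, h2, norm_neg]
      exact A.le_opNorm _
    have hud : A (v k) + B (w (k+1)) - b
        = (A (v (k+1)) + B (w (k+1)) - b) - (A (v (k+1)) - A (v k)) := by abel
    have hlb' : lbar k = l k + (α k / θ k) •
        ((A (v (k+1)) + B (w (k+1)) - b) - (A (v (k+1)) - A (v k))) := by
      rw [hlbar k, hud]
    have D := dual_core (θ k) (α k) (γ k) ‖A‖ ‖(xs - v (k+1)) + (v k - xs)‖
      (hθpos k) (norm_nonneg _) (hstep k)
      (A (v (k+1)) + B (w (k+1)) - b) (A (v (k+1)) - A (v k)) (l k) (l (k+1)) ls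
      (hiii k) hdb
    rw [← hlb', inner_sub_left] at D
    -- linking identities
    have h1 := congrArg A (hi k)
    have h2 := congrArg B (hv k)
    simp only [map_sub, map_smul] at h1 h2
    have hfeas' : α k • (A xs + B ys) = α k • b := congrArg (fun z => α k • z) hfeas
    have hZ : α k • A xs + A (x k) - (1+α k) • A (x (k+1))
        + α k • B ys + B (y k) - (1+α k) • B (y (k+1)) = -(θ k • (l (k+1) - l k)) := by
      rw [hiii k]
      linear_combination (norm := module) hfeas' - h1 - h2
    have Hlink : α k * ⟪lbar k, A xs⟫ + ⟪lbar k, A (x k)⟫ - (1+α k) * ⟪lbar k, A (x (k+1))⟫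
        + α k * ⟪lbar k, B ys⟫ + ⟪lbar k, B (y k)⟫ - (1+α k) * ⟪lbar k, B (y (k+1))⟫
        = -(θ k * ⟪lbar k, l (k+1) - l k⟫) := by
      have h := congrArg (fun z => ⟪lbar k, z⟫) hZ
      simpa only [inner_add_right, inner_sub_right, real_inner_smul_right,
        inner_neg_right] using h
    have H2 : (1+α k) * ⟪ls, A (x (k+1)) + B (y (k+1)) - b⟫
        = ⟪ls, A (x k) + B (y k) - b⟫ + θ k * ⟪ls, l (k+1) - l k⟫ := by
      have h := congrArg (fun z => ⟪ls, z⟫) (hZ2 k)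
      simpa only [inner_add_right, real_inner_smul_right] using h
    have hEexp : (1+α k) * E (k+1)
        = (1+α k)*(f (x (k+1)) + g (y (k+1)) + ⟪ls, A (x (k+1)) + B (y (k+1)) - b⟫
            - f xs - g ys)
          + (γ k + α k * μf)/2 * ‖xs - v (k+1)‖^2
          + (β k + α k * μg)/2 * ‖ys - w (k+1)‖^2
          + θ k/2 * ‖l (k+1) - ls‖^2 := by
      rw [hE (k+1), hγrec k, hβrec k, hθrec k,
        show ‖v (k+1) - xs‖ = ‖xs - v (k+1)‖ from norm_sub_rev _ _,
        show ‖w (k+1) - ys‖ = ‖ys - w (k+1)‖ from norm_sub_rev _ _]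
      have hne : (1 + α k) ≠ 0 := ne_of_gt (h1α k)
      field_simp
    have hEk := hE k
    have hq : 0 ≤ β k / 2 * ‖(ys - w (k+1)) + (w k - ys)‖^2 :=
      mul_nonneg (by linarith [hβpos k]) (sq_nonneg _)
    linarith [If', IIf, PCf, Ig', IIg, PCg, D, Hlink, H2, hEexp, hEk, hq]
  -- Lyapunov decay along θ
  have hEθ : ∀ k, E k ≤ θ k * E 0 := by
    intro k; induction k with
    | zero => rw [hθ0]; linarith
    | succ k ih =>
      have h := hstepE k
      have hθk : θ k = (1+α k) * θ (k+1) := by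
        rw [hθrec k, mul_comm]
        exact (div_mul_cancel₀ (θ k) (h1α k).ne').symm
      have hE0eq : θ k * E 0 = (1+α k) * (θ (k+1) * E 0) := by rw [hθk]; ring
      have : (1+α k) * E (k+1) ≤ (1+α k) * (θ (k+1) * E 0) := by linarith
      exact le_of_mul_le_mul_left this (h1α k)
  have hE0nonneg : 0 ≤ E 0 := by
    have h := hE 0
    have h1 := hLpos 0
    have n1 : 0 ≤ γ 0 / 2 * ‖v 0 - xs‖^2 := mul_nonneg (by linarith) (sq_nonneg _)
    have n2 : 0 ≤ β 0 / 2 * ‖w 0 - ys‖^2 := mul_nonneg (by linarith) (sq_nonneg _)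
    have n3 : 0 ≤ θ 0 / 2 * ‖l 0 - ls‖^2 := mul_nonneg (by linarith [hθpos 0]) (sq_nonneg _)
    linarith
  have hEl : ∀ k, θ k / 2 * ‖l k - ls‖^2 ≤ E k := by
    intro k
    have h := hE k
    have h1 := hLpos k
    have n1 : 0 ≤ γ k / 2 * ‖v k - xs‖^2 := mul_nonneg (by linarith [hγpos k]) (sq_nonneg _)
    have n2 : 0 ≤ β k / 2 * ‖w k - ys‖^2 := mul_nonneg (by linarith [hβpos k]) (sq_nonneg _)
    linarith
  have hlb : ∀ k, ‖l k - ls‖ ≤ Real.sqrt (2 * E 0) := by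
    intro k
    have h1 : θ k / 2 * ‖l k - ls‖^2 ≤ θ k / 2 * (2 * E 0) := by
      have := le_trans (hEl k) (hEθ k)
      nlinarith
    have h2 : ‖l k - ls‖^2 ≤ 2 * E 0 :=
      le_of_mul_le_mul_left (by linarith) (by linarith [hθpos k] : (0:ℝ) < θ k / 2)
    calc ‖l k - ls‖ = Real.sqrt (‖l k - ls‖^2) := (Real.sqrt_sq (norm_nonneg _)).symm
      _ ≤ Real.sqrt (2 * E 0) := Real.sqrt_le_sqrt h2
  have hresid : ∀ k, A (x k) + B (y k) - b = θ k • (A (x 0) + B (y 0) - b - l 0 + l k) := by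
    intro k; induction k with
    | zero => rw [hθ0, one_smul]; abel
    | succ k ih =>
      have h := hZ2 k
      rw [ih] at h
      have hθk : θ k = (1+α k) * θ (k+1) := by
        rw [hθrec k, mul_comm]
        exact (div_mul_cancel₀ (θ k) (h1α k).ne').symm
      refine smul_right_injective _ (ne_of_gt (h1α k)) ?_
      show (1+α k) • (A (x (k+1)) + B (y (k+1)) - b)
        = (1+α k) • (θ (k+1) • (A (x 0) + B (y 0) - b - l 0 + l (k+1)))
      rw [h, smul_smul, ← hθk]
      module
  have hresb : ∀ k, ‖A (x k) + B (y k) - b‖ ≤ θ k * R0 := by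
    intro k
    rw [hresid k, norm_smul, Real.norm_eq_abs, abs_of_pos (hθpos k)]
    refine mul_le_mul_of_nonneg_left ?_ (hθpos k).le
    have hsplit : A (x 0) + B (y 0) - b - l 0 + l k
        = (A (x 0) + B (y 0) - b) + ((l k - ls) + (ls - l 0)) := by abel
    rw [hsplit, hR0]
    have t1 := norm_add_le (A (x 0) + B (y 0) - b) ((l k - ls) + (ls - l 0))
    have t2 := norm_add_le (l k - ls) (ls - l 0)
    have t3 : ‖ls - l 0‖ = ‖l 0 - ls‖ := norm_sub_rev _ _
    have t4 := hlb k
    linarith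
  have hbr : ∀ k, f (x k) + g (y k) + ⟪ls, A (x k) + B (y k) - b⟫ - f xs - g ys
      ≤ θ k * E 0 := by
    intro k
    have h := hE k
    have n1 : 0 ≤ γ k / 2 * ‖v k - xs‖^2 := mul_nonneg (by linarith [hγpos k]) (sq_nonneg _)
    have n2 : 0 ≤ β k / 2 * ‖w k - ys‖^2 := mul_nonneg (by linarith [hβpos k]) (sq_nonneg _)
    have n3 : 0 ≤ θ k / 2 * ‖l k - ls‖^2 := mul_nonneg (by linarith [hθpos k]) (sq_nonneg _)
    linarith [hEθ k]
  have habs : ∀ k, |f (x k) + g (y k) - f xs - g ys| ≤ θ k * (E 0 + ‖ls‖ * R0) := by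
    intro k
    have hip : |⟪ls, A (x k) + B (y k) - b⟫| ≤ ‖ls‖ * (θ k * R0) :=
      le_trans (abs_real_inner_le_norm _ _)
        (mul_le_mul_of_nonneg_left (hresb k) (norm_nonneg ls))
    obtain ⟨hip1, hip2⟩ := abs_le.mp hip
    have h1 := hbr k
    have h2 := hLpos k
    have hE0' : 0 ≤ θ k * E 0 := mul_nonneg (hθpos k).le hE0nonneg
    rw [abs_le]
    constructor <;> nlinarith
  -- θ decay rates
  have hQpos : 0 < Q := by rw [hQ]; linarith [Real.sqrt_nonneg (γ 0)]
  have hAQ : ‖A‖ ≤ Q := by rw [hQ]; linarith [Real.sqrt_nonneg (γ 0)]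
  have hγθ : ∀ k, γ 0 * θ k ≤ γ k := by
    intro k; induction k with
    | zero => rw [hθ0]; linarith
    | succ k ih =>
      rw [hγrec k, hθrec k, ← mul_div_assoc]
      rw [div_le_div_iff₀ (h1α k) (h1α k)]
      nlinarith [mul_nonneg (hα k).le hμf, h1α k]
  have hαA : ∀ k, Real.sqrt (γ 0) * θ k ≤ α k * ‖A‖ := by
    intro k
    have hsq : (Real.sqrt (γ 0) * θ k)^2 ≤ (α k * ‖A‖)^2 := by
      rw [mul_pow, mul_pow, Real.sq_sqrt hγ0pos.le]
      have h := hstep k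
      nlinarith [hγθ k, hθpos k]
    have h1 : 0 ≤ Real.sqrt (γ 0) * θ k := mul_nonneg (Real.sqrt_nonneg _) (hθpos k).le
    have h2 : 0 ≤ α k * ‖A‖ := mul_nonneg (hα k).le hA.le
    calc Real.sqrt (γ 0) * θ k = Real.sqrt ((Real.sqrt (γ 0) * θ k)^2) :=
          (Real.sqrt_sq h1).symm
      _ ≤ Real.sqrt ((α k * ‖A‖)^2) := Real.sqrt_le_sqrt hsq
      _ = α k * ‖A‖ := Real.sqrt_sq h2
  have claim1 : ∀ k : ℕ, θ k * (Q + Real.sqrt (γ 0) * k) ≤ Q := by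
    intro k; induction k with
    | zero => rw [hθ0]; push_cast; norm_num
    | succ k ih =>
      rw [hθrec k, div_mul_eq_mul_div, div_le_iff₀ (h1α k)]
      push_cast
      have h5 : θ k * Real.sqrt (γ 0) ≤ α k * Q := by
        have := hαA k
        nlinarith [hα k]
      nlinarith [ih]
  have bound1 : ∀ k : ℕ, θ k ≤ Q / (Q + Real.sqrt (γ 0) * k) := by
    intro k
    have hd : (0:ℝ) < Q + Real.sqrt (γ 0) * k := by
      have : (0:ℝ) ≤ Real.sqrt (γ 0) * k := mul_nonneg (Real.sqrt_nonneg _) (Nat.cast_nonneg k)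
      linarith
    rw [le_div_iff₀ hd]
    exact claim1 k
  have claim2 : ∀ k : ℕ, θ k * (2*Q + Real.sqrt μf * k)^2 ≤ 4*Q^2 := by
    rcases eq_or_lt_of_le hμf with hμ0 | hμpos
    · intro k
      rw [← hμ0, Real.sqrt_zero]
      have := hθle1 k
      have := hθpos k
      nlinarith [sq_nonneg Q, hQpos]
    · have hγ0 : γ 0 = μf := hγinit hμpos
      have hγconst : ∀ k, γ k = μf := by
        intro k; induction k with
        | zero => exact hγ0
        | succ k ih =>
          rw [hγrec k, ih, div_eq_iff (h1α k).ne']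
          ring
      intro k; induction k with
      | zero => rw [hθ0]; push_cast; nlinarith [sq_nonneg Q]
      | succ k ih =>
        have hs2 : Real.sqrt (θ k) ^ 2 = θ k := Real.sq_sqrt (hθpos k).le
        have ht2 : (α k * ‖A‖)^2 = μf * θ k := by
          rw [mul_pow, hstep k, hγconst k]
        have hst : Real.sqrt (θ k) * Real.sqrt μf = α k * ‖A‖ := by
          have h1 : (Real.sqrt (θ k) * Real.sqrt μf)^2 = (α k * ‖A‖)^2 := by
            rw [mul_pow, hs2, Real.sq_sqrt hμf, ht2]; ring
          have h2 : 0 ≤ Real.sqrt (θ k) * Real.sqrt μf :=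
            mul_nonneg (Real.sqrt_nonneg _) (Real.sqrt_nonneg _)
          have h3 : 0 ≤ α k * ‖A‖ := mul_nonneg (hα k).le hA.le
          calc Real.sqrt (θ k) * Real.sqrt μf
              = Real.sqrt ((Real.sqrt (θ k) * Real.sqrt μf)^2) := (Real.sqrt_sq h2).symm
            _ = Real.sqrt ((α k * ‖A‖)^2) := by rw [h1]
            _ = α k * ‖A‖ := Real.sqrt_sq h3
        have hc0 : (0:ℝ) ≤ 2*Q + Real.sqrt μf * k := by
          have : (0:ℝ) ≤ Real.sqrt μf * k := mul_nonneg (Real.sqrt_nonneg _) (Nat.cast_nonneg k)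
          linarith
        have hu0 : 0 ≤ Real.sqrt (θ k) * (2*Q + Real.sqrt μf * k) :=
          mul_nonneg (Real.sqrt_nonneg _) hc0
        have hsc : Real.sqrt (θ k) * (2*Q + Real.sqrt μf * k) ≤ 2*Q := by
          have h1 : (Real.sqrt (θ k) * (2*Q + Real.sqrt μf * k))^2 ≤ (2*Q)^2 := by
            rw [mul_pow, hs2]
            nlinarith [ih]
          calc Real.sqrt (θ k) * (2*Q + Real.sqrt μf * k)
              = Real.sqrt ((Real.sqrt (θ k) * (2*Q + Real.sqrt μf * k))^2) :=
                (Real.sqrt_sq hu0).symm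
            _ ≤ Real.sqrt ((2*Q)^2) := Real.sqrt_le_sqrt h1
            _ = 2*Q := Real.sqrt_sq (by linarith)
        have htμ : α k * ‖A‖ ≤ Real.sqrt μf := by
          have h1 : (α k * ‖A‖)^2 ≤ (Real.sqrt μf)^2 := by
            rw [ht2, Real.sq_sqrt hμf]
            nlinarith [hθle1 k, hθpos k]
          have h3 : 0 ≤ α k * ‖A‖ := mul_nonneg (hα k).le hA.le
          calc α k * ‖A‖ = Real.sqrt ((α k * ‖A‖)^2) := (Real.sqrt_sq h3).symm
            _ ≤ Real.sqrt ((Real.sqrt μf)^2) := Real.sqrt_le_sqrt h1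
            _ = Real.sqrt μf := Real.sqrt_sq (Real.sqrt_nonneg _)
        have hQA : Real.sqrt μf = Q - ‖A‖ := by rw [hQ, hγ0]; ring
        have ht0 : 0 ≤ α k * ‖A‖ := mul_nonneg (hα k).le hA.le
        -- 4Q t + t^2 ≤ 4 Q^2 α where t = α‖A‖
        have h8 : 0 ≤ 4*Q^2 - 4*Q*‖A‖ - (α k * ‖A‖)*‖A‖ := by
          have h6 : (α k * ‖A‖) * ‖A‖ ≤ (Q - ‖A‖) * ‖A‖ := by
            rw [← hQA]
            exact mul_le_mul_of_nonneg_right htμ hA.le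
          nlinarith [mul_nonneg (by linarith [hQA, Real.sqrt_nonneg μf] : (0:ℝ) ≤ Q - ‖A‖)
            (by linarith : (0:ℝ) ≤ 4*Q - ‖A‖)]
        have h7 : 4*Q*(α k * ‖A‖) + (α k * ‖A‖)^2 ≤ 4*Q^2*(α k) := by
          have h9 := mul_nonneg (hα k).le h8
          nlinarith [h9]
        have key : θ k * (2*Q + Real.sqrt μf * ((k:ℝ)+1))^2
            = (Real.sqrt (θ k) * (2*Q + Real.sqrt μf * k) + α k * ‖A‖)^2 := by
          linear_combination (-(2*Q + Real.sqrt μf * ((k:ℝ)+1))^2) * hs2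
            + (2*(Real.sqrt (θ k) * (2*Q + Real.sqrt μf * (k:ℝ)))
               + Real.sqrt (θ k) * Real.sqrt μf + α k * ‖A‖) * hst
        rw [hθrec k, div_mul_eq_mul_div, div_le_iff₀ (h1α k)]
        push_cast
        rw [key]
        have p1 : (Real.sqrt (θ k) * (2*Q + Real.sqrt μf * k)) * (Real.sqrt (θ k) * (2*Q + Real.sqrt μf * k)) ≤ (2*Q)*(2*Q) :=
          mul_le_mul hsc hsc hu0 (by linarith)
        have p2 : (Real.sqrt (θ k) * (2*Q + Real.sqrt μf * k)) * (α k * ‖A‖) ≤ (2*Q) * (α k * ‖A‖) :=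
          mul_le_mul_of_nonneg_right hsc ht0
        nlinarith [p1, p2, h7]
  have bound2 : ∀ k : ℕ, θ k ≤ 4*Q^2 / (2*Q + Real.sqrt μf * k)^2 := by
    intro k
    have hd : (0:ℝ) < (2*Q + Real.sqrt μf * k)^2 := by
      have : (0:ℝ) ≤ Real.sqrt μf * k := mul_nonneg (Real.sqrt_nonneg _) (Nat.cast_nonneg k)
      positivity
    rw [le_div_iff₀ hd]
    exact claim2 k
  intro k
  refine ⟨by linarith [hstepE k], hEθ k, hresb k, hbr k, habs k, le_min (bound1 k) (bound2 k)⟩
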